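/- Let Σ be a finite set, a ≥ 1 an integer, and let c_1,…,c_a : Σ → ℂ have pairwise disjoint supports and d_1,…,d_a : Σ → ℂ have pairwise disjoint supports. Then the inner product of the corresponding product states in H_a is given by the permanent-type formula ⟨Φ(c_1,…,c_a), Φ(d_1,…,d_a)⟩ = ∑_{σ ∈ S_a} ∏_{j=1}^{a} ⟨c_j, d_{σ(j)}⟩, where S_a is the group of permutations of {1,…,a} and ⟨c,d⟩ = ∑_{μ∈Σ} conj(c(μ))·d(μ). (Generalization of equation (G5): the Gram matrix of a-magnon states is determined by the Gram matrix of 1-magnon states.) -/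

import Mathlib

/-- The localized `a`-magnon product state `Φ(c_1,…,c_a)` as a function on finite subsets
of `Σ` (an element of `H_a`). -/
noncomputable def magnon {σ : Type*} [Fintype σ] [DecidableEq σ]
    {ι : Type*} [Fintype ι] [DecidableEq ι] (c : ι → σ → ℂ) : Finset σ → ℂ :=
  fun S => ∑ g : ι → σ,
    if Function.Injective g ∧ Finset.image g Finset.univ = S then ∏ j, c j (g j) else 0

lemma exists_perm {σ : Type*} [DecidableEq σ] {a : ℕ} {g h : Fin a → σ}
    (hg : Function.Injective g) (hh : Function.Injective h)
    (him : Finset.image h Finset.univ = Finset.image g Finset.univ) :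
    ∃ π : Equiv.Perm (Fin a), ∀ j, h (π j) = g j := by
  have hmem : ∀ j, ∃ i, h i = g j := by
    intro j
    have : g j ∈ Finset.image h Finset.univ := by
      rw [him]; exact Finset.mem_image_of_mem g (Finset.mem_univ j)
    obtain ⟨i, -, hi⟩ := Finset.mem_image.mp this
    exact ⟨i, hi⟩
  choose t ht using hmem
  have htinj : Function.Injective t := fun i j hij => hg (by rw [← ht i, ← ht j, hij])
  exact ⟨Equiv.ofBijective t (Finite.injective_iff_bijective.mp htinj), fun j => ht j⟩

/-- Equation (G5), generalized: if `c_1,…,c_a` have pairwise disjoint supports and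
`d_1,…,d_a` have pairwise disjoint supports, then the `H_a` inner product of the product
states is the permanent-type expression
`⟨Φ(c), Φ(d)⟩ = ∑_{π ∈ S_a} ∏_j ⟨c_j, d_{π(j)}⟩`. -/
theorem magnon_inner_permanent
    {σ : Type*} [Fintype σ] [DecidableEq σ] {a : ℕ} (ha : 1 ≤ a)
    (c d : Fin a → σ → ℂ)
    (hc : ∀ i j : Fin a, i ≠ j →
      Disjoint (Function.support (c i)) (Function.support (c j)))
    (hd : ∀ i j : Fin a, i ≠ j →
      Disjoint (Function.support (d i)) (Function.support (d j))) :
    ∑ S : Finset σ, (starRingEnd ℂ) (magnon c S) * magnon d S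
      = ∑ π : Equiv.Perm (Fin a), ∏ j : Fin a,
          ∑ μ : σ, (starRingEnd ℂ) (c j μ) * d (π j) μ := by
  classical
  -- vanishing lemma for non-injective f
  have vanish : ∀ (f : Fin a → σ), ¬ Function.Injective f →
      ∀ π : Equiv.Perm (Fin a),
        ∏ j, (starRingEnd ℂ) (c j (f j)) * d (π j) (f j) = 0 := by
    intro f hf π
    rw [Function.not_injective_iff] at hf
    obtain ⟨i, i', hfi, hne⟩ := hf
    have hci : c i (f i) = 0 ∨ c i' (f i') = 0 := by
      by_contra hcon
      push_neg at hcon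
      exact Set.disjoint_left.mp (hc i i' hne) (Function.mem_support.mpr hcon.1)
        (Function.mem_support.mpr (by rw [hfi]; exact hcon.2))
    rcases hci with h0 | h0
    · exact Finset.prod_eq_zero (Finset.mem_univ i) (by simp [h0])
    · exact Finset.prod_eq_zero (Finset.mem_univ i') (by simp [h0])
  -- middle expression
  have hR : (∑ π : Equiv.Perm (Fin a), ∏ j : Fin a,
        ∑ μ : σ, (starRingEnd ℂ) (c j μ) * d (π j) μ)
      = ∑ g : Fin a → σ, if Function.Injective g then
          ∑ π : Equiv.Perm (Fin a), ∏ j, (starRingEnd ℂ) (c j (g j)) * d (π j) (g j)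
        else 0 := by
    have : ∀ π : Equiv.Perm (Fin a),
        (∏ j : Fin a, ∑ μ : σ, (starRingEnd ℂ) (c j μ) * d (π j) μ)
        = ∑ g : Fin a → σ, ∏ j, (starRingEnd ℂ) (c j (g j)) * d (π j) (g j) := by
      intro π
      rw [Finset.prod_univ_sum]
      rfl
    rw [Finset.sum_congr rfl fun π _ => this π, Finset.sum_comm]
    refine Finset.sum_congr rfl fun g _ => ?_
    by_cases hg : Function.Injective g
    · rw [if_pos hg]
    · rw [if_neg hg, Finset.sum_eq_zero fun π _ => vanish g hg π]
  rw [hR]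
  -- expand LHS
  have hL : ∀ S : Finset σ, (starRingEnd ℂ) (magnon c S) * magnon d S
      = ∑ g : Fin a → σ, ∑ h : Fin a → σ,
          if (Function.Injective g ∧ Finset.image g Finset.univ = S) ∧
             (Function.Injective h ∧ Finset.image h Finset.univ = S) then
            (starRingEnd ℂ) (∏ j, c j (g j)) * ∏ j, d j (h j) else 0 := by
    intro S
    rw [magnon, magnon, map_sum, Finset.sum_mul_sum]
    refine Finset.sum_congr rfl fun g _ => Finset.sum_congr rfl fun h _ => ?_
    rw [apply_ite (starRingEnd ℂ), map_zero]
    split_ifs with h1 h2 h3 <;> simp_all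
  rw [Finset.sum_congr rfl fun S _ => hL S, Finset.sum_comm]
  refine Finset.sum_congr rfl fun g _ => ?_
  rw [Finset.sum_comm]
  -- collapse the sum over S
  have hS : ∀ h : Fin a → σ,
      (∑ S : Finset σ, if (Function.Injective g ∧ Finset.image g Finset.univ = S) ∧
          (Function.Injective h ∧ Finset.image h Finset.univ = S) then
          (starRingEnd ℂ) (∏ j, c j (g j)) * ∏ j, d j (h j) else 0)
      = if Function.Injective g ∧ Function.Injective h ∧
          Finset.image h Finset.univ = Finset.image g Finset.univ then
          (starRingEnd ℂ) (∏ j, c j (g j)) * ∏ j, d j (h j) else 0 := by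
    intro h
    by_cases H : Function.Injective g ∧ Function.Injective h ∧
        Finset.image h Finset.univ = Finset.image g Finset.univ
    · rw [if_pos H]
      rw [Finset.sum_eq_single (Finset.image g Finset.univ)]
      · rw [if_pos ⟨⟨H.1, rfl⟩, H.2.1, H.2.2⟩]
      · intro S _ hne
        rw [if_neg]
        rintro ⟨⟨-, h1⟩, -⟩
        exact hne h1.symm
      · intro habs; exact absurd (Finset.mem_univ _) habs
    · rw [if_neg H, Finset.sum_eq_zero]
      intro S _
      rw [if_neg]
      rintro ⟨⟨h1, h2⟩, h3, h4⟩
      exact H ⟨h1, h3, h4 ▸ h2.symm ▸ rfl⟩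
  rw [Finset.sum_congr rfl fun h _ => hS h]
  by_cases hg : Function.Injective g
  swap
  · rw [if_neg hg, Finset.sum_eq_zero]
    intro h _
    rw [if_neg]; rintro ⟨h1, -⟩; exact hg h1
  rw [if_pos hg]
  -- now the bijection between h's and permutations
  have hterm : ∀ π : Equiv.Perm (Fin a),
      (∏ j, (starRingEnd ℂ) (c j (g j)) * d (π j) (g j))
      = (starRingEnd ℂ) (∏ j, c j (g j)) * ∏ j, d j (g (π⁻¹ j)) := by
    intro π
    rw [Finset.prod_mul_distrib, map_prod]
    congr 1
    rw [← Equiv.prod_comp π (fun j => d j (g (π⁻¹ j)))]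
    simp
  rw [Finset.sum_congr rfl fun π _ => hterm π]
  rw [← Finset.sum_filter]
  refine Finset.sum_bij'
    (i := fun h hh => Classical.choose (exists_perm hg (Finset.mem_filter.mp hh).2.2.1
        (Finset.mem_filter.mp hh).2.2.2))
    (j := fun π _ => g ∘ ⇑π⁻¹) (fun _ _ => Finset.mem_univ _) ?_ ?_ ?_ ?_
  · -- g ∘ π⁻¹ is in the filter
    intro π _
    refine Finset.mem_filter.mpr ⟨Finset.mem_univ _, hg, hg.comp π⁻¹.injective, ?_⟩
    rw [show Finset.image (g ∘ ⇑π⁻¹) Finset.univ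
        = Finset.image g (Finset.image (⇑π⁻¹) Finset.univ) from
        (Finset.image_image (g := g) (f := ⇑π⁻¹) (s := Finset.univ)).symm]
    congr 1
    exact Finset.image_univ_equiv π⁻¹
  · -- left inverse : j (i h) = h
    intro h hh
    have spec := Classical.choose_spec (exists_perm hg (Finset.mem_filter.mp hh).2.2.1
        (Finset.mem_filter.mp hh).2.2.2)
    set π := Classical.choose (exists_perm hg (Finset.mem_filter.mp hh).2.2.1
        (Finset.mem_filter.mp hh).2.2.2)
    funext k
    have := spec (π⁻¹ k)
    rw [Equiv.Perm.coe_inv, Equiv.apply_symm_apply] at this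
    exact this.symm
  · -- right inverse : i (j π) = π
    intro π hπ
    have helper : ∀ (E : ∃ π' : Equiv.Perm (Fin a), ∀ j, (g ∘ ⇑π⁻¹) (π' j) = g j),
        Classical.choose E = π := by
      intro E
      have spec := Classical.choose_spec E
      ext j
      have : π⁻¹ (Classical.choose E j) = j := hg (spec j)
      have := congrArg π this
      rw [show π (π⁻¹ (Classical.choose E j)) = Classical.choose E j from π.apply_symm_apply _] at this
      exact congrArg Fin.val this
    exact helper _
  · -- terms agree
    intro h hh
    have spec := Classical.choose_spec (exists_perm hg (Finset.mem_filter.mp hh).2.2.1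
        (Finset.mem_filter.mp hh).2.2.2)
    set π := Classical.choose (exists_perm hg (Finset.mem_filter.mp hh).2.2.1
        (Finset.mem_filter.mp hh).2.2.2)
    beta_reduce
    congr 1
    refine Finset.prod_congr rfl fun j _ => ?_
    have := spec (π⁻¹ j)
    rw [Equiv.Perm.coe_inv, Equiv.apply_symm_apply] at this
    exact congrArg (d j) this
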